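/- For every integer n ≥ 0, Σ_{k=0}^{n} (−1)^{n+k} · C(2n+1, n−k) · a_k = 1 (as integers), where a_k = (2k+1) + Σ_{m=2}^{k+1} Σ_{l=1}^{k} (2l−1)·C(k+m−l−1, 2m−3). -/
import Mathlib
open Finset

/-- Lucas numbers. -/
def Luc : ℕ → ℤ
  | 0 => 2
  | 1 => 1
  | n + 2 => Luc (n + 1) + Luc n

lemma Luc_add_two (n : ℕ) : Luc (n + 2) = Luc (n + 1) + Luc n := rfl

lemma AB (n : ℕ) :
    (∑ m ∈ range n, Nat.choose (n + m) (2 * m + 1)) = Nat.fib (2 * n) ∧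
    (∑ m ∈ range (n + 1), Nat.choose (n + m) (2 * m)) = Nat.fib (2 * n + 1) := by
  induction n with
  | zero => simp
  | succ n ih =>
    obtain ⟨hA, hB⟩ := ih
    have hA1 : (∑ m ∈ range (n + 1), Nat.choose (n + 1 + m) (2 * m + 1))
        = Nat.fib (2 * (n + 1)) := by
      have : ∀ m, Nat.choose (n + 1 + m) (2 * m + 1)
          = Nat.choose (n + m) (2 * m) + Nat.choose (n + m) (2 * m + 1) := by
        intro m
        have h1 : n + 1 + m = (n + m) + 1 := by omega
        rw [h1, Nat.choose_succ_succ]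
      rw [sum_congr rfl fun m _ => this m, sum_add_distrib, hB,
        sum_range_succ, Nat.choose_eq_zero_of_lt (by omega), hA]
      have : 2 * (n + 1) = (2 * n) + 2 := by omega
      rw [this, Nat.fib_add_two]
      omega
    refine ⟨hA1, ?_⟩
    -- B (n+1)
    rw [sum_range_succ']
    have h0 : Nat.choose (n + 1 + 0) (2 * 0) = 1 := by simp
    rw [h0]
    have hsplit : ∀ m, Nat.choose (n + 1 + (m + 1)) (2 * (m + 1))
        = Nat.choose (n + 1 + m) (2 * m + 1) + Nat.choose (n + 1 + m) (2 * m + 2) := by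
      intro m
      have h1 : n + 1 + (m + 1) = (n + 1 + m) + 1 := by omega
      have h2 : 2 * (m + 1) = (2 * m + 1) + 1 := by omega
      rw [h1, h2, Nat.choose_succ_succ]
    rw [sum_congr rfl fun m _ => hsplit m, sum_add_distrib, hA1]
    have hBrw : (∑ m ∈ range (n + 1), Nat.choose (n + 1 + m) (2 * m + 2)) + 1
        = Nat.fib (2 * n + 1) := by
      rw [sum_range_succ, Nat.choose_eq_zero_of_lt (by omega), ← hB, sum_range_succ']
      have : ∀ m, Nat.choose (n + (m + 1)) (2 * (m + 1)) = Nat.choose (n + 1 + m) (2 * m + 2) := by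
        intro m; congr 1 <;> omega
      rw [sum_congr rfl fun m _ => this m]
      simp
    have hfib : Nat.fib (2 * (n + 1) + 1) = Nat.fib (2 * n + 1) + Nat.fib (2 * (n + 1)) := by
      have : 2 * (n + 1) + 1 = (2 * n + 1) + 2 := by omega
      rw [this, Nat.fib_add_two, show (2 * n + 1) + 1 = 2 * (n + 1) by omega]
    omega

lemma Asum_eq {n t : ℕ} (h : n ≤ t) :
    (∑ m ∈ range t, Nat.choose (n + m) (2 * m + 1)) = Nat.fib (2 * n) := by
  rw [← (AB n).1]
  refine (sum_subset (range_subset_range.2 h) ?_).symm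
  intro m _ hm
  rw [mem_range, not_lt] at hm
  exact Nat.choose_eq_zero_of_lt (by omega)

lemma inner_sum' {k l : ℕ} (h1 : 1 ≤ l) (h2 : l ≤ k) :
    (∑ m ∈ Icc 2 (k + 1), (Nat.choose (k + m - l - 1) (2 * m - 3) : ℤ))
      = (Nat.fib (2 * (k + 1 - l)) : ℤ) := by
  have : ∑ m ∈ Icc 2 (k + 1), (Nat.choose (k + m - l - 1) (2 * m - 3) : ℤ)
      = ∑ m ∈ range k, (Nat.choose ((k + 1 - l) + m) (2 * m + 1) : ℤ) := by
    rw [← Finset.Ico_add_one_right_eq_Icc, sum_Ico_eq_sum_range]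
    have hk : k + 1 + 1 - 2 = k := by omega
    rw [hk]
    refine sum_congr rfl fun m _ => ?_
    congr 2 <;> omega
  rw [this, ← Nat.cast_sum]
  rw [Asum_eq (by omega)]

lemma PQ (k : ℕ) :
    ((2 * (k : ℤ) + 1) + ∑ l ∈ Icc 1 k, (2 * (l : ℤ) - 1) * (Nat.fib (2 * (k + 1 - l)) : ℤ)
        = Luc (2 * k + 1)) ∧
    ((2 * (k : ℤ) + 3) + ∑ l ∈ Icc 1 k, (2 * (l : ℤ) - 1) * (Nat.fib (2 * (k + 1 - l) + 1) : ℤ)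
        = Luc (2 * k + 2)) := by
  induction k with
  | zero => constructor <;> simp <;> decide
  | succ k ih =>
    obtain ⟨hP, hQ⟩ := ih
    have hsplitD : ∀ l ∈ Icc 1 k, (Nat.fib (2 * (k + 1 + 1 - l)) : ℤ)
        = (Nat.fib (2 * (k + 1 - l)) : ℤ) + (Nat.fib (2 * (k + 1 - l) + 1) : ℤ) := by
      intro l hl
      rw [mem_Icc] at hl
      rw [show 2 * (k + 1 + 1 - l) = 2 * (k + 1 - l) + 2 by omega, Nat.fib_add_two]
      push_cast; ring
    have hsplitE : ∀ l ∈ Icc 1 k, (Nat.fib (2 * (k + 1 + 1 - l) + 1) : ℤ)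
        = (Nat.fib (2 * (k + 1 - l)) : ℤ) + 2 * (Nat.fib (2 * (k + 1 - l) + 1) : ℤ) := by
      intro l hl
      rw [mem_Icc] at hl
      rw [show 2 * (k + 1 + 1 - l) + 1 = 2 * (k + 1 - l) + 1 + 2 by omega, Nat.fib_add_two,
        show 2 * (k + 1 - l) + 1 + 1 = 2 * (k + 1 - l) + 2 by omega, Nat.fib_add_two]
      push_cast; ring
    have hDk1 : ∑ l ∈ Icc 1 (k + 1), (2 * (l : ℤ) - 1) * (Nat.fib (2 * (k + 1 + 1 - l)) : ℤ)
        = (∑ l ∈ Icc 1 k, (2 * (l : ℤ) - 1) * (Nat.fib (2 * (k + 1 - l)) : ℤ))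
          + (∑ l ∈ Icc 1 k, (2 * (l : ℤ) - 1) * (Nat.fib (2 * (k + 1 - l) + 1) : ℤ))
          + (2 * ((k : ℤ) + 1) - 1) := by
      rw [sum_Icc_succ_top (by omega)]
      rw [show 2 * (k + 1 + 1 - (k + 1)) = 2 by omega]
      rw [sum_congr rfl fun l hl => by rw [hsplitD l hl]]
      simp only [mul_add]
      rw [sum_add_distrib]
      push_cast [Nat.fib_two]
      ring
    have hEk1 : ∑ l ∈ Icc 1 (k + 1), (2 * (l : ℤ) - 1) * (Nat.fib (2 * (k + 1 + 1 - l) + 1) : ℤ)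
        = (∑ l ∈ Icc 1 k, (2 * (l : ℤ) - 1) * (Nat.fib (2 * (k + 1 - l)) : ℤ))
          + 2 * (∑ l ∈ Icc 1 k, (2 * (l : ℤ) - 1) * (Nat.fib (2 * (k + 1 - l) + 1) : ℤ))
          + 2 * (2 * ((k : ℤ) + 1) - 1) := by
      rw [sum_Icc_succ_top (by omega)]
      rw [show 2 * (k + 1 + 1 - (k + 1)) + 1 = 3 by omega]
      rw [sum_congr rfl fun l hl => by rw [hsplitE l hl]]
      simp only [mul_add]
      rw [sum_add_distrib]
      rw [show (Nat.fib 3 : ℤ) = 2 by decide]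
      have hcomm : ∀ x ∈ Icc 1 k, (2 * (x : ℤ) - 1) * (2 * (Nat.fib (2 * (k + 1 - x) + 1) : ℤ))
          = 2 * ((2 * (x : ℤ) - 1) * (Nat.fib (2 * (k + 1 - x) + 1) : ℤ)) := fun x _ => by ring
      rw [sum_congr rfl hcomm, ← mul_sum]
      push_cast
      ring
    have hL1 : Luc (2 * (k + 1) + 1) = Luc (2 * k + 1) + Luc (2 * k + 2) := by
      rw [show 2 * (k + 1) + 1 = (2 * k + 1) + 2 by omega, Luc_add_two,
        show 2 * k + 1 + 1 = 2 * k + 2 by omega]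
      ring
    have hL2 : Luc (2 * (k + 1) + 2) = Luc (2 * k + 1) + 2 * Luc (2 * k + 2) := by
      rw [show 2 * (k + 1) + 2 = (2 * k + 2) + 2 by omega, Luc_add_two,
        show 2 * k + 2 + 1 = (2 * k + 1) + 2 by omega, Luc_add_two]
      ring
    constructor
    · rw [hDk1, hL1]
      push_cast
      linarith [hP, hQ]
    · rw [hEk1, hL2]
      push_cast
      linarith [hP, hQ]

noncomputable section
def alp : Zsqrtd 5 := ⟨1, 1⟩
def bet : Zsqrtd 5 := ⟨1, -1⟩

lemma alp_add_bet : alp + bet = ((2 : ℤ) : Zsqrtd 5) := by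
  ext <;> simp [alp, bet]

lemma alp_mul_bet : alp * bet = ((-4 : ℤ) : Zsqrtd 5) := by
  ext <;> simp [alp, bet, Zsqrtd.re_mul, Zsqrtd.im_mul]

lemma alp_sq : alp ^ 2 = 2 * alp + 4 := by
  ext <;> simp [alp, pow_two, Zsqrtd.re_mul, Zsqrtd.im_mul] <;> norm_num

lemma bet_sq : bet ^ 2 = 2 * bet + 4 := by
  ext <;> simp [bet, pow_two, Zsqrtd.re_mul, Zsqrtd.im_mul] <;> norm_num

lemma pow_add_pow_eq (m : ℕ) :
    alp ^ m + bet ^ m = ((2 ^ m * Luc m : ℤ) : Zsqrtd 5) := by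
  induction m using Nat.strong_induction_on with
  | _ m ih =>
    match m with
    | 0 => norm_num [Luc]
    | 1 =>
      show alp ^ 1 + bet ^ 1 = _
      rw [pow_one, pow_one, alp_add_bet]
      norm_num [Luc]
    | (m + 2) =>
      have h1 := ih (m + 1) (by omega)
      have h0 := ih m (by omega)
      have ha : alp ^ (m + 2) = 2 * alp ^ (m + 1) + 4 * alp ^ m := by
        have : alp ^ (m + 2) = alp ^ m * alp ^ 2 := by ring
        rw [this, alp_sq]; ring
      have hb : bet ^ (m + 2) = 2 * bet ^ (m + 1) + 4 * bet ^ m := by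
        have : bet ^ (m + 2) = bet ^ m * bet ^ 2 := by ring
        rw [this, bet_sq]; ring
      rw [ha, hb]
      have : 2 * alp ^ (m + 1) + 4 * alp ^ m + (2 * bet ^ (m + 1) + 4 * bet ^ m)
          = 2 * (alp ^ (m + 1) + bet ^ (m + 1)) + 4 * (alp ^ m + bet ^ m) := by ring
      rw [this, h1, h0, Luc_add_two]
      push_cast
      ring

lemma key_sum (n : ℕ) :
    ∑ k ∈ range (n + 1),
      (-1 : ℤ) ^ (n + k) * (Nat.choose (2 * n + 1) (n - k) : ℤ) * Luc (2 * k + 1) = 1 := by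
  have hexp : ((2 : ℤ) : Zsqrtd 5) ^ (2 * n + 1)
      = ∑ j ∈ range (2 * n + 1 + 1),
          alp ^ j * bet ^ (2 * n + 1 - j) * (Nat.choose (2 * n + 1) j : ℕ) := by
    rw [← alp_add_bet, add_pow]
  -- split the range
  have hsplit : (range (2 * n + 1 + 1)) = range ((n + 1) + (n + 1)) := by
    congr 1; omega
  rw [hsplit, sum_range_add] at hexp
  -- reflect the first half
  rw [← sum_range_reflect] at hexp
  -- now combine termwise
  have hterm : ∀ k ∈ range (n + 1),
      alp ^ (n + 1 - 1 - k) * bet ^ (2 * n + 1 - (n + 1 - 1 - k)) * (Nat.choose (2 * n + 1) (n + 1 - 1 - k) : ℕ)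
      + alp ^ (n + 1 + k) * bet ^ (2 * n + 1 - (n + 1 + k)) * (Nat.choose (2 * n + 1) (n + 1 + k) : ℕ)
      = ((2 ^ (2 * n + 1) * ((-1 : ℤ) ^ (n + k) * (Nat.choose (2 * n + 1) (n - k) : ℤ) * Luc (2 * k + 1)) : ℤ) : Zsqrtd 5) := by
    intro k hk
    rw [mem_range] at hk
    have hk' : k ≤ n := by omega
    have e1 : n + 1 - 1 - k = n - k := by omega
    have e2 : 2 * n + 1 - (n - k) = (n - k) + (2 * k + 1) := by omega
    have e3 : 2 * n + 1 - (n + 1 + k) = n - k := by omega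
    have e4 : n + 1 + k = (n - k) + (2 * k + 1) := by omega
    have e5 : Nat.choose (2 * n + 1) (n + 1 + k) = Nat.choose (2 * n + 1) (n - k) := by
      rw [← Nat.choose_symm (show n + 1 + k ≤ 2 * n + 1 by omega), e3]
    rw [e1, e2, e3, e5, e4]
    have hc : alp ^ (n - k) * bet ^ (n - k + (2 * k + 1)) * ((Nat.choose (2 * n + 1) (n - k) : ℕ) : Zsqrtd 5)
        + alp ^ (n - k + (2 * k + 1)) * bet ^ (n - k) * ((Nat.choose (2 * n + 1) (n - k) : ℕ) : Zsqrtd 5)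
        = (alp * bet) ^ (n - k) * (alp ^ (2 * k + 1) + bet ^ (2 * k + 1))
            * ((Nat.choose (2 * n + 1) (n - k) : ℕ) : Zsqrtd 5) := by
      rw [mul_pow, pow_add, pow_add]; ring
    rw [hc, alp_mul_bet, pow_add_pow_eq]
    have hZ : (-4 : ℤ) ^ (n - k) * (2 ^ (2 * k + 1) * Luc (2 * k + 1))
          * (Nat.choose (2 * n + 1) (n - k) : ℤ)
        = 2 ^ (2 * n + 1) * ((-1 : ℤ) ^ (n + k) * (Nat.choose (2 * n + 1) (n - k) : ℤ)
            * Luc (2 * k + 1)) := by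
      have h4 : (-4 : ℤ) ^ (n - k) = (-1 : ℤ) ^ (n + k) * 2 ^ (2 * (n - k)) := by
        rw [show (-4 : ℤ) = (-1) * 2 ^ 2 by norm_num, mul_pow, ← pow_mul]
        congr 1
        rw [show n + k = (n - k) + 2 * k by omega, pow_add]
        simp [pow_mul]
      rw [h4, show (2 : ℤ) ^ (2 * n + 1) = 2 ^ (2 * (n - k)) * 2 ^ (2 * k + 1) by
        rw [← pow_add]; congr 1; omega]
      ring
    rw [show ((Nat.choose (2 * n + 1) (n - k) : ℕ) : Zsqrtd 5)
        = ((Nat.choose (2 * n + 1) (n - k) : ℤ) : Zsqrtd 5) by push_cast; ring,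
      ← Int.cast_pow, ← Int.cast_mul, ← Int.cast_mul]
    exact congrArg _ hZ
  rw [← sum_add_distrib, sum_congr rfl hterm, ← Int.cast_sum, ← mul_sum,
    ← Int.cast_pow] at hexp
  have hZeq : (2 : ℤ) ^ (2 * n + 1)
      = 2 ^ (2 * n + 1) * ∑ k ∈ range (n + 1),
          (-1 : ℤ) ^ (n + k) * (Nat.choose (2 * n + 1) (n - k) : ℤ) * Luc (2 * k + 1) :=
    Int.cast_injective hexp
  have h2 : (2 : ℤ) ^ (2 * n + 1) ≠ 0 := by positivity
  have := mul_left_cancel₀ h2 (by rw [← hZeq, mul_one] :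
    (2 : ℤ) ^ (2 * n + 1) * 1 = 2 ^ (2 * n + 1) * ∑ k ∈ range (n + 1),
      (-1 : ℤ) ^ (n + k) * (Nat.choose (2 * n + 1) (n - k) : ℤ) * Luc (2 * k + 1))
  omega
end

lemma a_eq (k : ℕ) :
    (2 * (k : ℤ) + 1) +
      ∑ m ∈ Finset.Icc 2 (k + 1), ∑ l ∈ Finset.Icc 1 k,
        (2 * (l : ℤ) - 1) * (Nat.choose (k + m - l - 1) (2 * m - 3) : ℤ)
      = Luc (2 * k + 1) := by
  rw [Finset.sum_comm]
  have h : ∀ l ∈ Icc 1 k,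
      (∑ m ∈ Icc 2 (k + 1), (2 * (l : ℤ) - 1) * (Nat.choose (k + m - l - 1) (2 * m - 3) : ℤ))
      = (2 * (l : ℤ) - 1) * (Nat.fib (2 * (k + 1 - l)) : ℤ) := by
    intro l hl
    rw [mem_Icc] at hl
    rw [← mul_sum, inner_sum' hl.1 hl.2]
  rw [sum_congr rfl h]
  exact (PQ k).1

theorem summation_formula (n : ℕ) (a : ℕ → ℤ)
    (ha : ∀ k, a k = (2 * (k : ℤ) + 1) +
      ∑ m ∈ Finset.Icc 2 (k + 1), ∑ l ∈ Finset.Icc 1 k,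
        (2 * (l : ℤ) - 1) * (Nat.choose (k + m - l - 1) (2 * m - 3) : ℤ)) :
    ∑ k ∈ Finset.range (n + 1),
      (-1 : ℤ) ^ (n + k) * (Nat.choose (2 * n + 1) (n - k) : ℤ) * a k = 1 := by
  have : ∀ k, a k = Luc (2 * k + 1) := fun k => by rw [ha k, a_eq]
  rw [sum_congr rfl fun k _ => by rw [this k]]
  exact key_sum n
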